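/- In a T-MDP, let p̂ be any family of empirical transition probabilities (for each non-terminal state s and action a, p̂(s,a,·) is a probability distribution over the children of s), let V̂(π) denote the value of policy π at the root computed via the Bellman recursion with p̂ in place of p, let n : Σ → ℕ assign a positive count n(σ) ≥ 1 to each leaf σ, and let β be any nonincreasing real-valued function on positive integers. Then the maximal upper confidence bound over all deterministic policies decomposes over leaves: max_π [V̂(π) + β(min_{σ∈X(π)} n(σ))] = max_{σ∈Σ} [max_{π∈Y(σ)} V̂(π) + β(n(σ))]. -/

import Mathlib

/-!
A Tree MDP (T-MDP): a finite rooted tree whose internal nodes are the non-terminal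
states `S`, whose leaves are the terminal states `T`, with actions `A`.
-/
structure TMDP (S T A : Type) [Fintype S] [Fintype T] [Fintype A]
    [DecidableEq S] [DecidableEq T] [DecidableEq A] where
  root : S
  parent : S ⊕ T → S
  act : S ⊕ T → A
  depth : S ⊕ T → ℕ
  p : S ⊕ T → ℝ
  r : S ⊕ T → ℝ
  γ : ℝ
  γ_nonneg : 0 ≤ γ
  γ_le_one : γ ≤ 1
  p_nonneg : ∀ n, 0 ≤ p n
  depth_eq_zero_iff : ∀ n, depth n = 0 ↔ n = Sum.inl root
  depth_parent : ∀ n, n ≠ Sum.inl root → depth n = depth (Sum.inl (parent n)) + 1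
  p_sum : ∀ (s : S) (a : A),
    ∑ n ∈ Finset.univ.filter
        (fun n : S ⊕ T => parent n = s ∧ act n = a ∧ n ≠ Sum.inl root), p n = 1

namespace TMDP

variable {S T A : Type} [Fintype S] [Fintype T] [Fintype A]
  [DecidableEq S] [DecidableEq T] [DecidableEq A]

/-- One step up the tree (towards the root). -/
def up (M : TMDP S T A) (n : S ⊕ T) : S ⊕ T := Sum.inl (M.parent n)

/-- A policy `π` is consistent with a node `n` if `π` takes the action following each
state on the unique path from the root to `n`. -/
def consistent (M : TMDP S T A) (π : S → A) (n : S ⊕ T) : Prop :=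
  ∀ k < M.depth n, π (M.parent (M.up^[k] n)) = M.act (M.up^[k] n)

/-- `X(π)`: the set of terminal states (leaves) consistent with policy `π`. -/
noncomputable def Xset (M : TMDP S T A) (π : S → A) : Finset T :=
  @Finset.filter _ (fun σ : T => M.consistent π (Sum.inr σ))
    (Classical.decPred _) Finset.univ

/-- `Y(σ)`: the set of deterministic policies consistent with the leaf `σ`. -/
noncomputable def Yset (M : TMDP S T A) (σ : T) : Finset (S → A) :=
  @Finset.filter _ (fun π : S → A => M.consistent π (Sum.inr σ))
    (Classical.decPred _) Finset.univ

end TMDP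

/-- In a T-MDP, let `p̂` be any family of empirical transition
probabilities, let `V̂(π)` be the value of policy `π` at the root computed via the
Bellman recursion with `p̂` in place of `p`, let `n : Σ → ℕ` assign a positive count to
each leaf, and let `β` be any nonincreasing real-valued function on positive integers.
Then the maximal upper confidence bound over all deterministic policies decomposes over
leaves:
`max_π [V̂(π) + β(min_{σ∈X(π)} n(σ))] = max_{σ∈Σ} [max_{π∈Y(σ)} V̂(π) + β(n(σ))]`. -/
theorem tmdp_max_ucb_decomposes_over_leaves
    {S T A : Type} [Fintype S] [Fintype T] [Fintype A]
    [DecidableEq S] [DecidableEq T] [DecidableEq A]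
    [Nonempty A] [Nonempty T]
    (M : TMDP S T A)
    (phat : (S ⊕ T) → ℝ)
    (hphat_nonneg : ∀ n, 0 ≤ phat n)
    (hphat_sum : ∀ (s : S) (a : A),
      ∑ n ∈ Finset.univ.filter
          (fun n : S ⊕ T => M.parent n = s ∧ M.act n = a ∧ n ≠ Sum.inl M.root),
        phat n = 1)
    (Vhat : (S → A) → (S ⊕ T) → ℝ)
    (hVhat_leaf : ∀ (π : S → A) (σ : T), Vhat π (Sum.inr σ) = 0)
    (hVhat_bellman : ∀ (π : S → A) (s : S),
      Vhat π (Sum.inl s) =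
        ∑ n ∈ Finset.univ.filter
            (fun n : S ⊕ T => M.parent n = s ∧ M.act n = π s ∧ n ≠ Sum.inl M.root),
          phat n * (M.r n + M.γ * Vhat π n))
    (n : T → ℕ) (hn : ∀ σ, 1 ≤ n σ)
    (β : ℕ → ℝ)
    (hβ : ∀ m₁ m₂ : ℕ, 1 ≤ m₁ → m₁ ≤ m₂ → β m₂ ≤ β m₁)
    (hX : ∀ π : S → A, (M.Xset π).Nonempty)
    (hY : ∀ σ : T, (M.Yset σ).Nonempty) :
    Finset.univ.sup' Finset.univ_nonempty
        (fun π : S → A =>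
          Vhat π (Sum.inl M.root) + β ((M.Xset π).inf' (hX π) n))
      = Finset.univ.sup' Finset.univ_nonempty
          (fun σ : T =>
            (M.Yset σ).sup' (hY σ) (fun π => Vhat π (Sum.inl M.root)) + β (n σ)) := by
  apply le_antisymm
  · apply Finset.sup'_le
    intro π _
    obtain ⟨σ, hσX, hσmin⟩ := Finset.exists_mem_eq_inf' (hX π) n
    have hπY : π ∈ M.Yset σ := by
      simp only [TMDP.Xset, Finset.mem_filter] at hσX
      simp only [TMDP.Yset, Finset.mem_filter]
      exact ⟨Finset.mem_univ _, hσX.2⟩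
    calc Vhat π (Sum.inl M.root) + β ((M.Xset π).inf' (hX π) n)
        = Vhat π (Sum.inl M.root) + β (n σ) := by rw [hσmin]
      _ ≤ (M.Yset σ).sup' (hY σ) (fun π => Vhat π (Sum.inl M.root)) + β (n σ) :=
          add_le_add_left (Finset.le_sup' (fun π : S → A => Vhat π (Sum.inl M.root)) hπY) _
      _ ≤ _ := Finset.le_sup' (fun σ : T => (M.Yset σ).sup' (hY σ) (fun π => Vhat π (Sum.inl M.root)) + β (n σ)) (Finset.mem_univ σ)
  · apply Finset.sup'_le
    intro σ _
    obtain ⟨π, hπY, hπmax⟩ :=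
      Finset.exists_mem_eq_sup' (hY σ) (fun π => Vhat π (Sum.inl M.root))
    have hσX : σ ∈ M.Xset π := by
      simp only [TMDP.Yset, Finset.mem_filter] at hπY
      simp only [TMDP.Xset, Finset.mem_filter]
      exact ⟨Finset.mem_univ _, hπY.2⟩
    have h1 : (M.Xset π).inf' (hX π) n ≤ n σ := Finset.inf'_le _ hσX
    have h2 : 1 ≤ (M.Xset π).inf' (hX π) n := by
      obtain ⟨σ', _, e⟩ := Finset.exists_mem_eq_inf' (hX π) n
      rw [e]; exact hn σ'
    calc (M.Yset σ).sup' (hY σ) (fun π => Vhat π (Sum.inl M.root)) + β (n σ)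
        = Vhat π (Sum.inl M.root) + β (n σ) := by rw [hπmax]
      _ ≤ Vhat π (Sum.inl M.root) + β ((M.Xset π).inf' (hX π) n) :=
          add_le_add_right (hβ _ _ h2 h1) _
      _ ≤ _ := Finset.le_sup' (fun π : S → A => Vhat π (Sum.inl M.root) + β ((M.Xset π).inf' (hX π) n)) (Finset.mem_univ π)
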